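/- Let M be a pointed metric space and let (μ_n) be a weakly Cauchy sequence in the Lipschitz-free space F(M). Then for every ε > 0 there exists a bounded subset C ⊂ M such that μ_n ∈ F(C) + ε·B_{F(M)} for every n. -/

import Mathlib

open Metric NNReal ENNReal Set Filter Topology

noncomputable section

namespace FreeSpace

variable {M : Type*} [MetricSpace M]

/-- The submodule of `M → ℝ` consisting of Lipschitz functions vanishing at `base`. -/
def lip0SM (M : Type*) [MetricSpace M] (base : M) : Submodule ℝ (M → ℝ) where
  carrier := {f | (∃ K : ℝ≥0, LipschitzWith K f) ∧ f base = 0}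
  add_mem' := by
    rintro f g ⟨⟨K, hK⟩, hf⟩ ⟨⟨L, hL⟩, hg⟩
    exact ⟨⟨K + L, hK.add hL⟩, by simp [hf, hg]⟩
  zero_mem' := ⟨⟨0, LipschitzWith.const (0 : ℝ)⟩, rfl⟩
  smul_mem' := by
    rintro c f ⟨⟨K, hK⟩, hf⟩
    refine ⟨⟨‖c‖₊ * K, ?_⟩, by simp [hf]⟩
    apply LipschitzWith.of_dist_le_mul
    intro x y
    have h1 := hK.dist_le_mul x y
    calc dist ((c • f) x) ((c • f) y) = ‖c‖ * dist (f x) (f y) := by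
          simp only [Pi.smul_apply]; rw [dist_smul₀]
      _ ≤ ‖c‖ * (↑K * dist x y) := by
          exact mul_le_mul_of_nonneg_left h1 (norm_nonneg c)
      _ = ↑(‖c‖₊ * K) * dist x y := by push_cast; ring

theorem lipschitzWith_sInf {f : M → ℝ} (hf : ∃ K : ℝ≥0, LipschitzWith K f) :
    LipschitzWith (sInf {K : ℝ≥0 | LipschitzWith K f}) f := by
  obtain ⟨K₀, hK₀⟩ := hf
  apply LipschitzWith.of_dist_le_mul
  intro x y
  rcases eq_or_ne x y with rfl | hxy
  · simp
  · have hpos : 0 < dist x y := dist_pos.mpr hxy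
    rw [← div_le_iff₀ hpos]
    have h2 : (⟨dist (f x) (f y) / dist x y, div_nonneg dist_nonneg dist_nonneg⟩ : ℝ≥0) ≤
        sInf {K : ℝ≥0 | LipschitzWith K f} := by
      apply le_csInf ⟨K₀, hK₀⟩
      intro K hK
      apply NNReal.coe_le_coe.mp
      show dist (f x) (f y) / dist x y ≤ (K : ℝ)
      rw [div_le_iff₀ hpos]
      exact hK.dist_le_mul x y
    exact NNReal.coe_le_coe.mpr h2

/-- The space `Lip₀(M)` of Lipschitz functions vanishing at the base point. -/
def Lip0 (M : Type*) [MetricSpace M] (base : M) : Type _ := ↥(lip0SM M base)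

namespace Lip0

variable {base : M}

instance : AddCommGroup (Lip0 M base) := inferInstanceAs (AddCommGroup ↥(lip0SM M base))
instance : Module ℝ (Lip0 M base) := inferInstanceAs (Module ℝ ↥(lip0SM M base))

/-- The underlying function of an element of `Lip₀(M)`. -/
def toFun (f : Lip0 M base) : M → ℝ := Subtype.val f

theorem exists_lip (f : Lip0 M base) : ∃ K : ℝ≥0, LipschitzWith K f.toFun := f.2.1

theorem map_base (f : Lip0 M base) : f.toFun base = 0 := f.2.2

private theorem neg_set_eq (g : M → ℝ) :
    {K : ℝ≥0 | LipschitzWith K (-g)} = {K : ℝ≥0 | LipschitzWith K g} := by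
  ext K
  simp only [Set.mem_setOf_eq]
  constructor
  · intro h
    have h2 : LipschitzWith K (fun x => -((-g) x)) := h.neg
    simpa [neg_neg] using h2
  · intro h
    exact h.neg

instance : NormedAddCommGroup (Lip0 M base) :=
  AddGroupNorm.toNormedAddCommGroup
  { toFun := fun f => ((sInf {K : ℝ≥0 | LipschitzWith K f.toFun} : ℝ≥0) : ℝ)
    map_zero' := by
      have h0 : LipschitzWith 0 (0 : Lip0 M base).toFun := LipschitzWith.const (0 : ℝ)
      have h1 : sInf {K : ℝ≥0 | LipschitzWith K (0 : Lip0 M base).toFun} = 0 :=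
        le_antisymm (csInf_le (OrderBot.bddBelow _) h0) zero_le
      simp [h1]
    add_le' := by
      intro f g
      have hf := lipschitzWith_sInf f.exists_lip
      have hg := lipschitzWith_sInf g.exists_lip
      have hfg : LipschitzWith (sInf {K : ℝ≥0 | LipschitzWith K f.toFun} +
          sInf {K : ℝ≥0 | LipschitzWith K g.toFun}) (f + g).toFun := hf.add hg
      have h2 : sInf {K : ℝ≥0 | LipschitzWith K (f + g).toFun} ≤
          sInf {K : ℝ≥0 | LipschitzWith K f.toFun} +
          sInf {K : ℝ≥0 | LipschitzWith K g.toFun} :=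
        csInf_le (OrderBot.bddBelow _) hfg
      rw [← NNReal.coe_add]
      exact NNReal.coe_le_coe.mpr h2
    neg' := by
      intro f
      exact congrArg (fun S : Set ℝ≥0 => ((sInf S : ℝ≥0) : ℝ)) (neg_set_eq f.toFun)
    eq_zero_of_map_eq_zero' := by
      intro f h
      have h0 : sInf {K : ℝ≥0 | LipschitzWith K f.toFun} = 0 := NNReal.coe_eq_zero.mp h
      have hl : LipschitzWith 0 f.toFun := h0 ▸ lipschitzWith_sInf f.exists_lip
      apply Subtype.ext
      funext x
      have h1 : dist (f.toFun x) (f.toFun base) ≤ 0 := by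
        simpa using hl.dist_le_mul x base
      have h2 : f.toFun x = f.toFun base := by
        rw [← dist_le_zero]; exact h1
      show f.toFun x = 0
      rw [h2, f.map_base] }

theorem norm_def (f : Lip0 M base) :
    ‖f‖ = ((sInf {K : ℝ≥0 | LipschitzWith K f.toFun} : ℝ≥0) : ℝ) := rfl

theorem lipschitzWith_norm (f : Lip0 M base) :
    LipschitzWith (sInf {K : ℝ≥0 | LipschitzWith K f.toFun}) f.toFun :=
  lipschitzWith_sInf f.exists_lip

instance : NormedSpace ℝ (Lip0 M base) where
  norm_smul_le c f := by
    have hf := lipschitzWith_sInf f.exists_lip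
    have h1 : LipschitzWith (‖c‖₊ * sInf {K : ℝ≥0 | LipschitzWith K f.toFun})
        (c • f).toFun := by
      apply LipschitzWith.of_dist_le_mul
      intro x y
      have h2 := hf.dist_le_mul x y
      calc dist ((c • f).toFun x) ((c • f).toFun y)
          = ‖c‖ * dist (f.toFun x) (f.toFun y) := by
            show dist (c • f.toFun x) (c • f.toFun y) = _
            rw [dist_smul₀]
        _ ≤ ‖c‖ * (↑(sInf {K : ℝ≥0 | LipschitzWith K f.toFun}) * dist x y) :=
            mul_le_mul_of_nonneg_left h2 (norm_nonneg c)
        _ = ↑(‖c‖₊ * sInf {K : ℝ≥0 | LipschitzWith K f.toFun}) * dist x y := by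
            push_cast; ring
    have h3 : sInf {K : ℝ≥0 | LipschitzWith K (c • f).toFun} ≤
        ‖c‖₊ * sInf {K : ℝ≥0 | LipschitzWith K f.toFun} :=
      csInf_le (OrderBot.bddBelow _) h1
    show ((sInf {K : ℝ≥0 | LipschitzWith K (c • f).toFun} : ℝ≥0) : ℝ) ≤
      ‖c‖ * ((sInf {K : ℝ≥0 | LipschitzWith K f.toFun} : ℝ≥0) : ℝ)
    rw [← coe_nnnorm c, ← NNReal.coe_mul]
    exact NNReal.coe_le_coe.mpr h3

end Lip0

/-- The evaluation functional `δ(x) : f ↦ f(x)` as an element of the dual of `Lip₀(M)`. -/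
def evalδ (base : M) (x : M) : StrongDual ℝ (Lip0 M base) :=
  LinearMap.mkContinuous
    { toFun := fun f => f.toFun x
      map_add' := fun f g => rfl
      map_smul' := fun c f => rfl }
    (dist x base)
    (by
      intro f
      have h1 := f.lipschitzWith_norm.dist_le_mul x base
      rw [Real.dist_eq, f.map_base, sub_zero] at h1
      show ‖f.toFun x‖ ≤ dist x base * ‖f‖
      rw [Real.norm_eq_abs, mul_comm]
      exact h1)

/-- The Lipschitz-free space `F(M)`: the closed linear span of the evaluation
functionals inside the dual of `Lip₀(M)`. -/
def Free (M : Type*) [MetricSpace M] (base : M) :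
    Submodule ℝ (StrongDual ℝ (Lip0 M base)) :=
  (Submodule.span ℝ (Set.range (evalδ base))).topologicalClosure

/-- `δ(x)` as an element of `F(M)`. -/
def deltaF (base : M) (x : M) : ↥(Free M base) :=
  ⟨evalδ base x,
    Submodule.le_topologicalClosure _ (Submodule.subset_span (Set.mem_range_self x))⟩

/-- For a subset `A ⊆ M`, the free space `F(A)`, canonically identified with the
closed linear span of `{δ(x) : x ∈ A}` inside `F(M)`. -/
def freeOn (base : M) (A : Set M) : Submodule ℝ ↥(Free M base) :=
  @Submodule.topologicalClosure _ _ _ _ _ _ _ (Free M base).toAddSubmonoid.continuousAdd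
    (Submodule.span ℝ (deltaF base '' A))

section BanachProps

variable (E : Type*) [NormedAddCommGroup E] [NormedSpace ℝ E]

/-- A sequence is weakly Cauchy if every continuous linear functional sends it
to a convergent sequence. -/
def WeaklyCauchy {E : Type*} [NormedAddCommGroup E] [NormedSpace ℝ E] (u : ℕ → E) : Prop :=
  ∀ φ : StrongDual ℝ E, ∃ l : ℝ, Tendsto (fun n => φ (u n)) atTop (𝓝 l)

/-- A set is weakly precompact if every sequence in it has a weakly Cauchy subsequence. -/
def WeaklyPrecompact {E : Type*} [NormedAddCommGroup E] [NormedSpace ℝ E] (W : Set E) : Prop :=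
  ∀ u : ℕ → E, (∀ n, u n ∈ W) → ∃ g : ℕ → ℕ, StrictMono g ∧ WeaklyCauchy (u ∘ g)

/-- A normed space is weakly sequentially complete if every weakly Cauchy sequence
converges weakly. -/
def WeaklySeqComplete : Prop :=
  ∀ u : ℕ → E, WeaklyCauchy u →
    ∃ x : E, ∀ φ : StrongDual ℝ E, Tendsto (fun n => φ (u n)) atTop (𝓝 (φ x))

/-- The Schur property: weakly null sequences are norm null. -/
def SchurProperty : Prop :=
  ∀ u : ℕ → E, (∀ φ : StrongDual ℝ E, Tendsto (fun n => φ (u n)) atTop (𝓝 0)) →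
    Tendsto (fun n => ‖u n‖) atTop (𝓝 0)

/-- The approximation property. -/
def ApproxProperty : Prop :=
  ∀ W : Set E, IsCompact W → ∀ ε > (0 : ℝ), ∃ S : E →L[ℝ] E,
    FiniteDimensional ℝ ↥(LinearMap.range (S : E →ₗ[ℝ] E)) ∧ ∀ w ∈ W, ‖S w - w‖ ≤ ε

/-- The Dunford–Pettis property. -/
def DunfordPettisProperty : Prop :=
  ∀ (u : ℕ → E) (φ : ℕ → StrongDual ℝ E),
    (∀ ψ : StrongDual ℝ E, Tendsto (fun n => ψ (u n)) atTop (𝓝 0)) →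
    (∀ Φ : StrongDual ℝ (StrongDual ℝ E),
      Tendsto (fun n => Φ (φ n)) atTop (𝓝 0)) →
    Tendsto (fun n => φ n (u n)) atTop (𝓝 0)

/-- `E` contains an isomorphic copy of `X`: some closed subspace of `E` is linearly
isomorphic to `X`. -/
def ContainsIsoCopy (X : Type*) [NormedAddCommGroup X] [NormedSpace ℝ X] : Prop :=
  ∃ Y : Submodule ℝ E, IsClosed (Y : Set E) ∧ Nonempty (X ≃L[ℝ] ↥Y)

end BanachProps

instance : Fact ((1 : ℝ≥0∞) ≤ 1) := ⟨le_rfl⟩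
instance : Fact ((1 : ℝ≥0∞) ≤ ⊤) := ⟨le_top⟩

/-- The space `ℓ¹` of absolutely summable real sequences. -/
abbrev ellOne : Type := lp (fun _ : ℕ => ℝ) 1

/-- The space `ℓ∞` of bounded real sequences. -/
abbrev ellInfty : Type := lp (fun _ : ℕ => ℝ) ⊤

/-- A Banach space is `ℓ₁`-saturated if every infinite-dimensional closed subspace
contains a closed subspace isomorphic to `ℓ₁`. -/
def L1Saturated (E : Type*) [NormedAddCommGroup E] [NormedSpace ℝ E] : Prop :=
  ∀ Y : Submodule ℝ E, IsClosed (Y : Set E) → ¬FiniteDimensional ℝ ↥Y →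
    ContainsIsoCopy ↥Y ellOne

end FreeSpace

namespace FreeSpace


section Infra

variable {M : Type*} [MetricSpace M] {base : M}

instance instContinuousAddFree (base : M) : ContinuousAdd ↥(Free M base) :=
  (Free M base).toAddSubmonoid.continuousAdd

theorem Lip0.norm_le_of_lip (f : Lip0 M base) (K : ℝ≥0) (h : LipschitzWith K f.toFun) :
    ‖f‖ ≤ (K : ℝ) := by
  rw [Lip0.norm_def]
  exact_mod_cast NNReal.coe_le_coe.mpr (csInf_le (OrderBot.bddBelow _) h)

theorem Lip0.apply_abs_le (μ : StrongDual ℝ (Lip0 M base)) (f : Lip0 M base) :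
    |μ f| ≤ ‖μ‖ * ‖f‖ := by
  have := μ.le_opNorm f
  simpa [Real.norm_eq_abs] using this

theorem Lip0.dist_apply (f : Lip0 M base) (x y : M) :
    |f.toFun x - f.toFun y| ≤ ‖f‖ * dist x y := by
  have h := f.lipschitzWith_norm.dist_le_mul x y
  rw [Real.dist_eq] at h
  exact h

theorem norm_evalδ_sub (x y : M) : ‖evalδ base x - evalδ base y‖ ≤ dist x y := by
  apply ContinuousLinearMap.opNorm_le_bound _ dist_nonneg
  intro f
  have := Lip0.dist_apply f x y
  rw [ContinuousLinearMap.sub_apply, Real.norm_eq_abs, mul_comm]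
  exact this

/-- evaluation at a fixed Lipschitz function as a functional on the free space -/
def evalAt (g : Lip0 M base) : StrongDual ℝ ↥(Free M base) :=
  LinearMap.mkContinuous
    { toFun := fun μ : ↥(Free M base) => (μ : StrongDual ℝ (Lip0 M base)) g
      map_add' := fun μ ν => rfl
      map_smul' := fun c μ => rfl }
    ‖g‖
    (by
      intro μ
      have := Lip0.apply_abs_le (μ : StrongDual ℝ (Lip0 M base)) g
      simpa [Real.norm_eq_abs, mul_comm] using this)

@[simp] theorem evalAt_apply (g : Lip0 M base) (μ : ↥(Free M base)) :
    evalAt g μ = (μ : StrongDual ℝ (Lip0 M base)) g := rfl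

theorem span_eval_kill {C : Set M} {w : StrongDual ℝ (Lip0 M base)}
    (hw : w ∈ Submodule.span ℝ (evalδ base '' C)) (g : Lip0 M base)
    (hg : ∀ x ∈ C, g.toFun x = 0) : w g = 0 := by
  induction hw using Submodule.span_induction with
  | mem v hv =>
    obtain ⟨x, hx, rfl⟩ := hv
    exact hg x hx
  | zero => rfl
  | add u v _ _ hu hv => simp [ContinuousLinearMap.add_apply, hu, hv]
  | smul c u _ hu => simp [ContinuousLinearMap.smul_apply, hu]

theorem mem_freeOn_of_val_mem_span {C : Set M} (v : ↥(Free M base))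
    (hv : (v : StrongDual ℝ (Lip0 M base)) ∈ Submodule.span ℝ (evalδ base '' C)) :
    v ∈ freeOn base C := by
  apply Submodule.le_topologicalClosure
  have himg : evalδ base '' C = (Free M base).subtype '' (deltaF base '' C) := by
    rw [← Set.image_comp]
    rfl
  rw [himg, ← Submodule.map_span] at hv
  obtain ⟨u, hu, huv⟩ := hv
  have : u = v := Subtype.ext huv
  rwa [← this]

theorem span_range_bounded {w : StrongDual ℝ (Lip0 M base)}
    (hw : w ∈ Submodule.span ℝ (Set.range (evalδ base))) :
    ∃ R : ℝ, 0 ≤ R ∧ w ∈ Submodule.span ℝ (evalδ base '' closedBall base R) := by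
  induction hw using Submodule.span_induction with
  | mem v hv =>
    obtain ⟨x, rfl⟩ := hv
    exact ⟨dist x base, dist_nonneg, Submodule.subset_span
      ⟨x, by simp [mem_closedBall], rfl⟩⟩
  | zero => exact ⟨0, le_rfl, Submodule.zero_mem _⟩
  | add u v _ _ hu hv =>
    obtain ⟨R1, hR1, hu⟩ := hu
    obtain ⟨R2, hR2, hv⟩ := hv
    refine ⟨max R1 R2, le_max_of_le_left hR1, Submodule.add_mem _ ?_ ?_⟩
    · exact Submodule.span_mono (Set.image_mono
        (closedBall_subset_closedBall (le_max_left _ _))) hu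
    · exact Submodule.span_mono (Set.image_mono
        (closedBall_subset_closedBall (le_max_right _ _))) hv
  | smul c u _ hu =>
    obtain ⟨R, hR, hu⟩ := hu
    exact ⟨R, hR, Submodule.smul_mem _ c hu⟩

theorem exists_finite_approx (μ0 : ↥(Free M base)) {η : ℝ} (hη : 0 < η) :
    ∃ R : ℝ, 0 ≤ R ∧ ∃ w ∈ Submodule.span ℝ (evalδ base '' closedBall base R),
      ‖(μ0 : StrongDual ℝ (Lip0 M base)) - w‖ ≤ η := by
  have hmem : (μ0 : StrongDual ℝ (Lip0 M base)) ∈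
      closure (Submodule.span ℝ (Set.range (evalδ base)) : Set _) := by
    have h2 := μ0.2
    have : (Free M base : Set (StrongDual ℝ (Lip0 M base))) =
        closure (Submodule.span ℝ (Set.range (evalδ base)) : Set _) :=
      Submodule.topologicalClosure_coe _
    rw [← this]
    exact h2
  rw [Metric.mem_closure_iff] at hmem
  obtain ⟨w, hw, hdist⟩ := hmem η hη
  obtain ⟨R, hR, hwR⟩ := span_range_bounded hw
  exact ⟨R, hR, w, hwR, by rw [← dist_eq_norm]; exact hdist.le⟩

end Infra


section Infra2
open scoped Pointwise

variable {M : Type*} [MetricSpace M] {base : M}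

theorem dense_span_deltaF :
    Dense ((Submodule.span ℝ (Set.range (deltaF base)) : Submodule ℝ ↥(Free M base)) :
      Set ↥(Free M base)) := by
  intro v
  rw [IsInducing.subtypeVal.closure_eq_preimage_closure_image]
  have himg : (Subtype.val '' ((Submodule.span ℝ (Set.range (deltaF base)) :
      Submodule ℝ ↥(Free M base)) : Set ↥(Free M base))) =
      ((Submodule.span ℝ (Set.range (evalδ base))) : Set (StrongDual ℝ (Lip0 M base))) := by
    have h1 : Submodule.map (Free M base).subtype (Submodule.span ℝ (Set.range (deltaF base))) =
        Submodule.span ℝ (Set.range (evalδ base)) := by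
      rw [Submodule.map_span]
      congr 1
      rw [← Set.range_comp]
      rfl
    calc (Subtype.val '' _) = ((Submodule.map (Free M base).subtype
        (Submodule.span ℝ (Set.range (deltaF base)))) : Set _) := rfl
      _ = _ := by rw [h1]
  have hcl : closure ((Submodule.span ℝ (Set.range (evalδ base))) :
      Set (StrongDual ℝ (Lip0 M base))) = (Free M base : Set _) :=
    (Submodule.topologicalClosure_coe _)
  have key : Subtype.val v ∈ closure (Subtype.val '' ((Submodule.span ℝ (Set.range (deltaF base)) :
      Submodule ℝ ↥(Free M base)) : Set ↥(Free M base))) := by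
    rw [himg, hcl]
    exact v.2
  exact key

theorem evalAt_eq (Φ : StrongDual ℝ ↥(Free M base)) (g : Lip0 M base)
    (hg : ∀ x : M, Φ (deltaF base x) = g.toFun x) : evalAt g = Φ := by
  apply ContinuousLinearMap.ext_on (dense_span_deltaF (base := base))
  rintro v ⟨x, rfl⟩
  have : evalAt g (deltaF base x) = g.toFun x := rfl
  rw [this, hg x]

set_option maxHeartbeats 1000000 in
theorem exists_sep_function {εr : ℝ} (hεr : 0 < εr) (R : ℝ) (hR : 0 ≤ R)
    (μ0 : ↥(Free M base))
    (hfar : ∀ ν ∈ freeOn base (closedBall base R), εr < ‖μ0 - ν‖) :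
    ∃ f : Lip0 M base, LipschitzWith 1 f.toFun ∧
      (∀ x ∈ closedBall base R, f.toFun x = 0) ∧
      εr / 2 ≤ (μ0 : StrongDual ℝ (Lip0 M base)) f := by
  set S : Submodule ℝ ↥(Free M base) := freeOn base (closedBall base R) with hSdef
  set s : Set ↥(Free M base) := (S : Set ↥(Free M base)) + Metric.ball (0 : ↥(Free M base)) εr with hs
  have hconv : Convex ℝ s := (S.convex).add (convex_ball (0 : ↥(Free M base)) εr)
  have hopen : IsOpen s := IsOpen.add_left (s := (S : Set ↥(Free M base)))
    (Metric.isOpen_ball (x := (0 : ↥(Free M base))) (ε := εr))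
  have hdisj : μ0 ∉ s := by
    rintro ⟨ν, hν, b, hb, hνb⟩
    have h1 : εr < ‖μ0 - ν‖ := hfar ν hν
    have h2 : μ0 - ν = b := by rw [← hνb]; exact add_sub_cancel_left ν b
    rw [h2] at h1
    rw [Metric.mem_ball, dist_zero_right b] at hb
    linarith
  obtain ⟨f, hf⟩ := geometric_hahn_banach_open_point hconv hopen hdisj
  have hmem_s : ∀ ν ∈ S, ∀ b : ↥(Free M base), ‖b‖ < εr → ν + b ∈ s := by
    intro ν hν b hb
    exact Set.add_mem_add hν (by rwa [Metric.mem_ball, dist_zero_right b])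
  have h0ball : (0 : ↥(Free M base)) ∈ Metric.ball (0 : ↥(Free M base)) εr := by
    rwa [Metric.mem_ball, dist_self]
  have hfS : ∀ ν ∈ S, f ν = 0 := by
    intro ν hν
    by_contra hne
    have key : ∀ t : ℝ, t * f ν < f μ0 := by
      intro t
      have hmem : (t • ν + 0 : ↥(Free M base)) ∈ s :=
        hmem_s _ (S.smul_mem t hν) 0 (by rw [@norm_zero ↥(Free M base) _]; exact hεr)
      have h5 := hf _ hmem
      rw [add_zero, map_smul, smul_eq_mul] at h5
      exact h5
    rcases lt_or_gt_of_ne hne with hlt | hgt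
    · have := key ((f μ0 + 1) / f ν)
      rw [div_mul_cancel₀ _ hne] at this
      linarith
    · have := key ((f μ0 + 1) / f ν)
      rw [div_mul_cancel₀ _ hne] at this
      linarith
  have hball : ∀ b : ↥(Free M base), ‖b‖ < εr → f b < f μ0 := by
    intro b hb
    have hmem : ((0 : ↥(Free M base)) + b) ∈ s := hmem_s 0 (S.zero_mem) b hb
    have h5 := hf _ hmem
    rwa [zero_add] at h5
  have hfμ0pos : 0 < f μ0 := by
    have h5 := hball 0 (by rw [@norm_zero ↥(Free M base) _]; exact hεr)
    rwa [map_zero] at h5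
  have hεr2 : (0 : ℝ) < εr / 2 := by linarith
  have hfnorm : ∀ v : ↥(Free M base), |f v| ≤ f μ0 / (εr / 2) * ‖v‖ := by
    intro v
    rcases eq_or_ne v 0 with rfl | hv
    · simp
    · have hvn : 0 < ‖v‖ := (@norm_pos_iff ↥(Free M base) _ v).mpr hv
      set b : ↥(Free M base) := ((εr / 2) / ‖v‖) • v with hbdef
      have hbn : ‖b‖ = εr / 2 := by
        have h6 : ‖b‖ = ‖(εr / 2 / ‖v‖ : ℝ)‖ * ‖v‖ :=
          norm_smul (εr / 2 / ‖v‖) (v : StrongDual ℝ (Lip0 M base))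
        rw [h6, Real.norm_eq_abs, abs_of_pos (div_pos hεr2 hvn),
          div_mul_cancel₀ _ (ne_of_gt hvn)]
      have h1 : f b < f μ0 := hball b (by rw [hbn]; linarith)
      have h2 : f (-b) < f μ0 := hball (-b) (by rw [@norm_neg ↥(Free M base) _ b, hbn]; linarith)
      rw [map_neg f b] at h2
      have habs : |f b| ≤ f μ0 := abs_le.mpr ⟨by linarith, h1.le⟩
      have hfb : f b = (εr / 2) / ‖v‖ * f v := by rw [hbdef, map_smul]; rfl
      rw [hfb, abs_mul, abs_of_pos (div_pos hεr2 hvn)] at habs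
      have h7 : εr / 2 / ‖v‖ * |f v| * ‖v‖ ≤ f μ0 * ‖v‖ :=
        mul_le_mul_of_nonneg_right habs hvn.le
      have h8 : εr / 2 / ‖v‖ * |f v| * ‖v‖ = εr / 2 * |f v| := by
        rw [div_mul_eq_mul_div, div_mul_eq_mul_div, mul_div_cancel_right₀ _ (ne_of_gt hvn)]
      rw [h8] at h7
      rw [div_mul_eq_mul_div, le_div_iff₀ hεr2]
      nlinarith [h7]
  set c : ℝ := (εr / 2) / f μ0 with hcdef
  have hcpos : 0 < c := div_pos hεr2 hfμ0pos
  set Φ : ↥(Free M base) →L[ℝ] ℝ := c • f with hΦdef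
  have hΦS : ∀ v ∈ S, Φ v = 0 := by
    intro v hv
    show c • f v = 0
    rw [hfS v hv, smul_zero]
  have hΦμ0 : Φ μ0 = εr / 2 := by
    show c • f μ0 = εr / 2
    rw [hcdef, smul_eq_mul, div_mul_cancel₀ _ (ne_of_gt hfμ0pos)]
  have hΦbound : ∀ v : ↥(Free M base), |Φ v| ≤ ‖v‖ := by
    intro v
    show |c • f v| ≤ ‖v‖
    rw [smul_eq_mul, abs_mul, abs_of_pos hcpos]
    have := hfnorm v
    calc c * |f v| ≤ c * (f μ0 / (εr / 2) * ‖v‖) :=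
          mul_le_mul_of_nonneg_left this hcpos.le
      _ = ‖v‖ := by
          rw [hcdef]
          field_simp
  -- the function
  have hlip : LipschitzWith 1 (fun x => Φ (deltaF base x)) := by
    apply LipschitzWith.of_dist_le_mul
    intro x y
    have h1 : dist (Φ (deltaF base x)) (Φ (deltaF base y)) = |Φ (deltaF base x - deltaF base y)| := by
      rw [Real.dist_eq, ← map_sub]
    rw [h1]
    calc |Φ (deltaF base x - deltaF base y)| ≤ ‖deltaF base x - deltaF base y‖ := hΦbound _
      _ = ‖evalδ base x - evalδ base y‖ := rfl
      _ ≤ dist x y := norm_evalδ_sub x y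
      _ = 1 * dist x y := by rw [one_mul]
  have hbase : Φ (deltaF base base) = 0 := by
    have : deltaF base base ∈ S := Submodule.le_topologicalClosure _
      (Submodule.subset_span ⟨base, by simp [mem_closedBall, hR], rfl⟩)
    exact hΦS _ this
  refine ⟨⟨fun x => Φ (deltaF base x), ⟨1, hlip⟩, hbase⟩, hlip, ?_, ?_⟩
  · intro x hx
    have : deltaF base x ∈ S := Submodule.le_topologicalClosure _
      (Submodule.subset_span ⟨x, hx, rfl⟩)
    exact hΦS _ this
  · have hrep : evalAt (base := base) ⟨fun x => Φ (deltaF base x), ⟨1, hlip⟩, hbase⟩ = Φ :=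
      evalAt_eq Φ _ (fun x => rfl)
    have heq : (μ0 : StrongDual ℝ (Lip0 M base))
        ⟨fun x => Φ (deltaF base x), ⟨1, hlip⟩, hbase⟩ = Φ μ0 :=
      DFunLike.congr_fun hrep μ0
    rw [heq, hΦμ0]

end Infra2


section Infra3

variable {M : Type*} [MetricSpace M] {base : M}

theorem summable_of_unique {v : ℕ → ℝ} (h : ∀ i j, v i ≠ 0 → v j ≠ 0 → i = j) :
    Summable v := by
  by_cases hex : ∃ i, v i ≠ 0
  · obtain ⟨i, hi⟩ := hex
    apply summable_of_ne_finset_zero (s := {i})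
    intro j hj
    by_contra hvj
    exact hj (by simp [h j i hvj hi])
  · push_neg at hex
    exact summable_zero.congr (fun i => (hex i).symm)

theorem tsum_eq_unique {v : ℕ → ℝ} {i : ℕ} (h : ∀ j, j ≠ i → v j = 0) :
    ∑' j, v j = v i := tsum_eq_single i h

/-- sum of 1-Lipschitz functions with pairwise disjoint supports is 2-Lipschitz -/
theorem lipschitz_tsum_disjoint {h : ℕ → M → ℝ}
    (hl : ∀ j, LipschitzWith 1 (h j))
    (hd : ∀ x i j, h i x ≠ 0 → h j x ≠ 0 → i = j) :
    LipschitzWith 2 (fun x => ∑' j, h j x) := by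
  apply LipschitzWith.of_dist_le_mul
  intro x y
  have key : ∀ i j : ℕ, (∀ l, l ≠ i → h l x = 0) → (∀ l, l ≠ j → h l y = 0) →
      dist (∑' l, h l x) (∑' l, h l y) ≤ 2 * dist x y := by
    intro i j hix hjy
    rw [tsum_eq_unique hix, tsum_eq_unique hjy]
    have hbi := (hl i).dist_le_mul x y
    have hbj := (hl j).dist_le_mul x y
    rcases eq_or_ne i j with rfl | hij
    · calc dist (h i x) (h i y) ≤ 1 * dist x y := hbi
        _ ≤ 2 * dist x y := by nlinarith [dist_nonneg (x := x) (y := y)]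
    · have h1 : h j x = 0 := hix j (Ne.symm hij)
      have h2 : h i y = 0 := hjy i hij
      rw [Real.dist_eq] at hbi hbj ⊢
      have e1 : h i x - h j y = (h i x - h i y) + (h j x - h j y) := by
        rw [h1, h2]; ring
      rw [e1]
      calc |h i x - h i y + (h j x - h j y)| ≤ |h i x - h i y| + |h j x - h j y| := abs_add_le _ _
        _ ≤ 1 * dist x y + 1 * dist x y := add_le_add hbi hbj
        _ = 2 * dist x y := by ring
  by_cases hex : ∃ i, h i x ≠ 0
  · obtain ⟨i, hi⟩ := hex
    have hix : ∀ l, l ≠ i → h l x = 0 := fun l hl' => by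
      by_contra hne; exact hl' (hd x l i hne hi)
    by_cases hey : ∃ j, h j y ≠ 0
    · obtain ⟨j, hj⟩ := hey
      exact key i j hix (fun l hl' => by
        by_contra hne; exact hl' (hd y l j hne hj))
    · push_neg at hey
      exact key i i hix (fun l _ => hey l)
  · push_neg at hex
    by_cases hey : ∃ j, h j y ≠ 0
    · obtain ⟨j, hj⟩ := hey
      exact key j j (fun l _ => hex l) (fun l hl' => by
        by_contra hne; exact hl' (hd y l j hne hj))
    · push_neg at hey
      exact key 0 0 (fun l _ => hex l) (fun l _ => hey l)

/-- dependent choice producing a sequence with steps -/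
theorem seq_of_rel {α : Type*} (G : ℕ → α → Prop) (Rel : α → α → Prop)
    (h0 : ∃ a, G 0 a) (hstep : ∀ k a, G k a → ∃ b, G (k + 1) b ∧ Rel a b) :
    ∃ u : ℕ → α, (∀ k, G k (u k)) ∧ ∀ k, Rel (u k) (u (k + 1)) := by
  choose f hf1 hf2 using hstep
  let u : (k : ℕ) → {a : α // G k a} := fun k =>
    Nat.rec ⟨h0.choose, h0.choose_spec⟩ (fun k p => ⟨f k p.1 p.2, hf1 k p.1 p.2⟩) k
  refine ⟨fun k => (u k).1, fun k => (u k).2, fun k => ?_⟩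
  exact hf2 k (u k).1 (u k).2

end Infra3


section Infra4

variable {M : Type*} [MetricSpace M] {base : M}

theorem Lip0.toFun_sub (f g : Lip0 M base) (x : M) :
    (f - g).toFun x = f.toFun x - g.toFun x := rfl

theorem Lip0.toFun_add (f g : Lip0 M base) (x : M) :
    (f + g).toFun x = f.toFun x + g.toFun x := rfl

theorem Lip0.toFun_zero (x : M) : (0 : Lip0 M base).toFun x = 0 := rfl

/-- evaluation at a point, as a linear map on `Lip₀` -/
def evx (x : M) : Lip0 M base →ₗ[ℝ] ℝ where
  toFun := fun f => f.toFun x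
  map_add' := fun f g => rfl
  map_smul' := fun c f => rfl

theorem Lip0.toFun_finsetSum (s : Finset ℕ) (F : ℕ → Lip0 M base) (x : M) :
    (∑ j ∈ s, F j).toFun x = ∑ j ∈ s, (F j).toFun x :=
  map_sum (evx x) F s

theorem lipschitzWith_clip (base : M) (R : ℝ) :
    LipschitzWith 1 (fun x : M => max 0 (R - dist x base)) := by
  apply LipschitzWith.of_dist_le_mul
  intro x y
  rw [Real.dist_eq, NNReal.coe_one, one_mul]
  have h1 : |max 0 (R - dist x base) - max 0 (R - dist y base)| ≤
      |(R - dist x base) - (R - dist y base)| := by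
    rw [max_comm 0 (R - dist x base), max_comm 0 (R - dist y base)]
    exact abs_max_sub_max_le_abs _ _ _
  have h2 : |(R - dist x base) - (R - dist y base)| = |dist y base - dist x base| := by
    congr 1; ring
  have h3 : |dist y base - dist x base| ≤ dist y x := abs_dist_sub_le y x base
  calc |max 0 (R - dist x base) - max 0 (R - dist y base)| ≤ |dist y base - dist x base| := by
        rw [← h2]; exact h1
    _ ≤ dist y x := h3
    _ = dist x y := dist_comm y x

theorem Lip0.norm_le_ofReal {f : Lip0 M base} {K : ℝ≥0} (h : LipschitzWith K f.toFun) :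
    ‖f‖ ≤ (K : ℝ) := Lip0.norm_le_of_lip f K h

/-- data of one stage of the construction -/
structure StageData (M : Type*) [MetricSpace M] (base : M) where
  n : ℕ
  m : ℕ
  Rin : ℝ
  Rout : ℝ
  hl : Lip0 M base
  Gh : Lip0 M base

/-- invariants of one stage -/
def GoodStage (μ : ℕ → ↥(Free M base)) (ε : ℝ) (k : ℕ) (s : StageData M base) : Prop :=
  k ≤ s.n ∧ k ≤ s.m ∧ 0 ≤ s.Rin ∧ s.Rin ≤ s.Rout ∧
  LipschitzWith 1 s.hl.toFun ∧
  (∀ x : M, dist x base ≤ s.Rin → s.hl.toFun x = 0) ∧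
  (∀ x : M, s.Rout ≤ dist x base → s.hl.toFun x = 0) ∧
  3 * ε / 8 ≤ (↑(μ s.n) : StrongDual ℝ (Lip0 M base)) s.hl ∧
  |(↑(μ s.m) : StrongDual ℝ (Lip0 M base)) s.hl| ≤ ε / 32 ∧
  (∀ g : Lip0 M base, LipschitzWith 2 g.toFun →
    (∀ x : M, dist x base ≤ s.Rout → g.toFun x = 0) →
    |(↑(μ s.n) : StrongDual ℝ (Lip0 M base)) g| ≤ ε / 8 ∧
    |(↑(μ s.m) : StrongDual ℝ (Lip0 M base)) g| ≤ ε / 16) ∧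
  |(↑(μ s.n) : StrongDual ℝ (Lip0 M base)) s.Gh -
    (↑(μ s.m) : StrongDual ℝ (Lip0 M base)) s.Gh| ≤ ε / 32

set_option maxHeartbeats 1000000 in
theorem stage_step (μ : ℕ → ↥(Free M base)) (hμ : WeaklyCauchy μ) {ε : ℝ} (hε : 0 < ε)
    (H : ∀ C : Set M, Bornology.IsBounded C → ∃ n, ∀ ν ∈ freeOn base C, ε < ‖μ n - ν‖)
    (k : ℕ) (Rprev : ℝ) (hRprev : 0 ≤ Rprev) (Gh : Lip0 M base) :
    ∃ s : StageData M base, GoodStage μ ε k s ∧ s.Gh = Gh ∧ Rprev ≤ s.Rin := by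
  -- Cauchy threshold for the head function
  obtain ⟨l, hlim⟩ := hμ (evalAt Gh)
  rw [Metric.tendsto_atTop] at hlim
  obtain ⟨N1, hN1⟩ := hlim (ε / 64) (by linarith)
  have hhead : ∀ p q : ℕ, N1 ≤ p → N1 ≤ q →
      |(↑(μ p) : StrongDual ℝ (Lip0 M base)) Gh -
        (↑(μ q) : StrongDual ℝ (Lip0 M base)) Gh| ≤ ε / 32 := by
    intro p q hp hq
    have h1 := hN1 p hp
    have h2 := hN1 q hq
    rw [Real.dist_eq] at h1 h2
    have e1 : evalAt Gh (μ p) = (↑(μ p) : StrongDual ℝ (Lip0 M base)) Gh := rfl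
    have e2 : evalAt Gh (μ q) = (↑(μ q) : StrongDual ℝ (Lip0 M base)) Gh := rfl
    rw [e1] at h1
    rw [e2] at h2
    calc |(↑(μ p) : StrongDual ℝ (Lip0 M base)) Gh -
        (↑(μ q) : StrongDual ℝ (Lip0 M base)) Gh|
        = |((↑(μ p) : StrongDual ℝ (Lip0 M base)) Gh - l) -
          ((↑(μ q) : StrongDual ℝ (Lip0 M base)) Gh - l)| := by congr 1; ring
      _ ≤ |(↑(μ p) : StrongDual ℝ (Lip0 M base)) Gh - l| +
          |(↑(μ q) : StrongDual ℝ (Lip0 M base)) Gh - l| := abs_sub _ _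
      _ ≤ ε / 32 := by linarith
  set N : ℕ := max N1 k with hN
  -- the control index m
  set m : ℕ := N with hm
  -- finite approximation of μ m
  obtain ⟨R1, hR1, w', hw'mem, hw'⟩ := exists_finite_approx (base := base) (μ m)
    (show (0:ℝ) < ε / 32 by linarith)
  -- approximations of all small indices
  have happrox : ∀ p : ℕ, ∃ R : ℝ, 0 ≤ R ∧
      ∃ w ∈ Submodule.span ℝ (evalδ base '' closedBall base R),
        ‖(↑(μ p) : StrongDual ℝ (Lip0 M base)) - w‖ ≤ ε :=
    fun p => exists_finite_approx (μ p) hε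
  choose ρ hρ0 wp hwpmem hwp using happrox
  obtain ⟨B, hB⟩ := ((Finset.range N).image ρ).exists_le
  set Rin : ℝ := max (max Rprev R1) (max B 0) with hRin
  have hRin0 : 0 ≤ Rin := le_trans (le_max_right B 0) (le_max_right _ _)
  have hRprevRin : Rprev ≤ Rin := le_trans (le_max_left _ _) (le_max_left _ _)
  have hR1Rin : R1 ≤ Rin := le_trans (le_max_right _ _) (le_max_left _ _)
  -- the far witness, with large index
  obtain ⟨n, hn⟩ := H (closedBall base Rin) isBounded_closedBall
  have hnN : N ≤ n := by
    by_contra hlt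
    push_neg at hlt
    have hmem : wp n ∈ Submodule.span ℝ (evalδ base '' closedBall base Rin) := by
      apply Submodule.span_mono (Set.image_mono (closedBall_subset_closedBall _)) (hwpmem n)
      calc ρ n ≤ B := hB (ρ n) (Finset.mem_image_of_mem ρ (Finset.mem_range.mpr hlt))
        _ ≤ Rin := le_trans (le_max_left B 0) (le_max_right _ _)
    have hmemFree : wp n ∈ Free M base :=
      Submodule.le_topologicalClosure _
        (Submodule.span_mono (Set.image_subset_range _ _) hmem)
    set wF : ↥(Free M base) := ⟨wp n, hmemFree⟩ with hwF
    have h1 : wF ∈ freeOn base (closedBall base Rin) :=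
      mem_freeOn_of_val_mem_span wF hmem
    have h2 := hn wF h1
    have h3 : ‖μ n - wF‖ = ‖(↑(μ n) : StrongDual ℝ (Lip0 M base)) - wp n‖ := rfl
    rw [h3] at h2
    exact absurd (hwp n) (not_le.mpr h2)
  -- the separating function
  obtain ⟨f, hflip, hfvanish, hfval⟩ := exists_sep_function hε Rin hRin0 (μ n) hn
  -- finite approximation of μ n
  obtain ⟨R2, hR2, w, hwmem, hw⟩ := exists_finite_approx (base := base) (μ n)
    (show (0:ℝ) < ε / 16 by linarith)
  -- truncation
  set Rout : ℝ := 2 * max R2 Rin with hRout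
  have hRinRout : Rin ≤ Rout := by
    have h1 : Rin ≤ max R2 Rin := le_max_right _ _
    have h2 : 0 ≤ max R2 Rin := le_trans hRin0 h1
    linarith
  have hR2Rout : R2 ≤ Rout := by
    have h1 : R2 ≤ max R2 Rin := le_max_left _ _
    have h2 : 0 ≤ max R2 Rin := le_trans hR2 h1
    linarith
  set u : M → ℝ := fun x => max 0 (Rout - dist x base) with hu
  have hulip : LipschitzWith 1 u := lipschitzWith_clip base Rout
  have hu0 : ∀ x : M, 0 ≤ u x := fun x => le_max_left _ _
  set h : M → ℝ := fun x => max (min (f.toFun x) (u x)) (-(u x)) with hh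
  have hhlip : LipschitzWith 1 h := by
    have h1 : LipschitzWith (max (max 1 1) 1) h := (hflip.min hulip).max hulip.neg
    simpa using h1
  have hva : ∀ x : M, dist x base ≤ Rin → h x = 0 := by
    intro x hx
    have hf0 : f.toFun x = 0 := hfvanish x (mem_closedBall.mpr hx)
    show max (min (f.toFun x) (u x)) (-(u x)) = 0
    rw [hf0, min_eq_left (hu0 x), max_eq_left (by linarith [hu0 x])]
  have hvb : ∀ x : M, Rout ≤ dist x base → h x = 0 := by
    intro x hx
    have hux : u x = 0 := max_eq_left (by linarith)
    show max (min (f.toFun x) (u x)) (-(u x)) = 0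
    rw [hux, neg_zero, max_eq_right (min_le_right _ _)]
  have heqf : ∀ x : M, dist x base ≤ R2 → h x = f.toFun x := by
    intro x hx
    have hfx : |f.toFun x| ≤ dist x base := by
      have := hflip.dist_le_mul x base
      rw [Real.dist_eq, f.map_base, sub_zero, NNReal.coe_one, one_mul] at this
      exact this
    have hux : dist x base ≤ u x := by
      have h1 : Rout - dist x base ≥ dist x base := by
        have : dist x base ≤ max R2 Rin := le_trans hx (le_max_left _ _)
        rw [hRout]; linarith
      exact le_trans h1.le (le_max_right _ _) |>.trans_eq rfl
    have h1 : f.toFun x ≤ u x := le_trans (le_abs_self _) (le_trans hfx hux)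
    have h2 : -(u x) ≤ f.toFun x := by
      have := neg_abs_le (f.toFun x)
      have h3 : -(u x) ≤ -|f.toFun x| := neg_le_neg (le_trans hfx hux)
      linarith
    show max (min (f.toFun x) (u x)) (-(u x)) = f.toFun x
    rw [min_eq_left h1, max_eq_left h2]
  have hbase0 : h base = 0 := hva base (by rw [dist_self]; exact hRin0)
  set hlL : Lip0 M base := ⟨h, ⟨1, hhlip⟩, hbase0⟩ with hhlL
  -- main estimate for μ n against hlL
  have hdiffvanish : ∀ x ∈ closedBall base R2, (hlL - f).toFun x = 0 := by
    intro x hx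
    rw [Lip0.toFun_sub]
    have : hlL.toFun x = h x := rfl
    rw [this, heqf x (mem_closedBall.mp hx), sub_self]
  have hdifflip : LipschitzWith 2 (hlL - f).toFun := by
    have h1 : LipschitzWith (1 + 1) (fun x => hlL.toFun x - f.toFun x) := hhlip.sub hflip
    have h2 : (hlL - f).toFun = fun x => hlL.toFun x - f.toFun x := by
      funext x; exact Lip0.toFun_sub _ _ _
    rw [h2, show ((2:ℝ≥0)) = 1 + 1 by norm_num]
    exact h1
  have hdiffnorm : ‖hlL - f‖ ≤ 2 := by
    have := Lip0.norm_le_ofReal hdifflip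
    simpa using this
  have hG6 : 3 * ε / 8 ≤ (↑(μ n) : StrongDual ℝ (Lip0 M base)) hlL := by
    have hsplit : (↑(μ n) : StrongDual ℝ (Lip0 M base)) hlL =
        (↑(μ n) : StrongDual ℝ (Lip0 M base)) f +
        (↑(μ n) : StrongDual ℝ (Lip0 M base)) (hlL - f) := by
      rw [← map_add]
      congr 1
      abel
    have hkill : w (hlL - f) = 0 := span_eval_kill hwmem _ hdiffvanish
    have hsmall : |(↑(μ n) : StrongDual ℝ (Lip0 M base)) (hlL - f)| ≤ ε / 8 := by
      have heq : (↑(μ n) : StrongDual ℝ (Lip0 M base)) (hlL - f) =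
          ((↑(μ n) : StrongDual ℝ (Lip0 M base)) - w) (hlL - f) := by
        rw [ContinuousLinearMap.sub_apply, hkill, sub_zero]
      rw [heq]
      calc |((↑(μ n) : StrongDual ℝ (Lip0 M base)) - w) (hlL - f)| ≤
          ‖(↑(μ n) : StrongDual ℝ (Lip0 M base)) - w‖ * ‖hlL - f‖ :=
            Lip0.apply_abs_le _ _
        _ ≤ (ε / 16) * 2 := by
            apply mul_le_mul hw hdiffnorm (norm_nonneg _) (by linarith)
        _ = ε / 8 := by ring
    have := abs_le.mp hsmall
    rw [hsplit]
    linarith [hfval]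
  -- estimate for μ m against hlL
  have hG7 : |(↑(μ m) : StrongDual ℝ (Lip0 M base)) hlL| ≤ ε / 32 := by
    have hkill : w' hlL = 0 := span_eval_kill hw'mem _ (fun x hx =>
      hva x (le_trans (mem_closedBall.mp hx) hR1Rin))
    have heq : (↑(μ m) : StrongDual ℝ (Lip0 M base)) hlL =
        ((↑(μ m) : StrongDual ℝ (Lip0 M base)) - w') hlL := by
      rw [ContinuousLinearMap.sub_apply, hkill, sub_zero]
    rw [heq]
    have hnorm1 : ‖hlL‖ ≤ 1 := by
      have := Lip0.norm_le_ofReal (f := hlL) (K := 1) hhlip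
      simpa using this
    calc |((↑(μ m) : StrongDual ℝ (Lip0 M base)) - w') hlL| ≤
        ‖(↑(μ m) : StrongDual ℝ (Lip0 M base)) - w'‖ * ‖hlL‖ := Lip0.apply_abs_le _ _
      _ ≤ (ε / 32) * 1 := mul_le_mul hw' hnorm1 (norm_nonneg _) (by linarith)
      _ = ε / 32 := by ring
  -- estimate for tails
  have hG8 : ∀ g : Lip0 M base, LipschitzWith 2 g.toFun →
      (∀ x : M, dist x base ≤ Rout → g.toFun x = 0) →
      |(↑(μ n) : StrongDual ℝ (Lip0 M base)) g| ≤ ε / 8 ∧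
      |(↑(μ m) : StrongDual ℝ (Lip0 M base)) g| ≤ ε / 16 := by
    intro g hglip hgvanish
    have hgnorm : ‖g‖ ≤ 2 := by
      have := Lip0.norm_le_ofReal hglip
      simpa using this
    constructor
    · have hkill : w g = 0 := span_eval_kill hwmem _ (fun x hx =>
        hgvanish x (le_trans (mem_closedBall.mp hx) hR2Rout))
      have heq : (↑(μ n) : StrongDual ℝ (Lip0 M base)) g =
          ((↑(μ n) : StrongDual ℝ (Lip0 M base)) - w) g := by
        rw [ContinuousLinearMap.sub_apply, hkill, sub_zero]
      rw [heq]
      calc |((↑(μ n) : StrongDual ℝ (Lip0 M base)) - w) g| ≤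
          ‖(↑(μ n) : StrongDual ℝ (Lip0 M base)) - w‖ * ‖g‖ := Lip0.apply_abs_le _ _
        _ ≤ (ε / 16) * 2 := mul_le_mul hw hgnorm (norm_nonneg _) (by linarith)
        _ = ε / 8 := by ring
    · have hkill : w' g = 0 := span_eval_kill hw'mem _ (fun x hx =>
        hgvanish x (le_trans (mem_closedBall.mp hx) (le_trans hR1Rin hRinRout)))
      have heq : (↑(μ m) : StrongDual ℝ (Lip0 M base)) g =
          ((↑(μ m) : StrongDual ℝ (Lip0 M base)) - w') g := by
        rw [ContinuousLinearMap.sub_apply, hkill, sub_zero]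
      rw [heq]
      calc |((↑(μ m) : StrongDual ℝ (Lip0 M base)) - w') g| ≤
          ‖(↑(μ m) : StrongDual ℝ (Lip0 M base)) - w'‖ * ‖g‖ := Lip0.apply_abs_le _ _
        _ ≤ (ε / 32) * 2 := mul_le_mul hw' hgnorm (norm_nonneg _) (by linarith)
        _ = ε / 16 := by ring
  refine ⟨⟨n, m, Rin, Rout, hlL, Gh⟩, ⟨?_, ?_, hRin0, hRinRout, hhlip, hva, hvb, hG6, hG7, hG8, ?_⟩,
    rfl, hRprevRin⟩
  · exact le_trans (le_max_right N1 k) hnN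
  · exact le_max_right N1 k
  · exact hhead n m (le_trans (le_max_left N1 k) hnN) (le_max_left N1 k)

end Infra4

/-- **Lemma 3.4.** A weakly Cauchy sequence in a free space is almost supported on a
bounded subset of `M`. -/
theorem weaklyCauchy_almost_bounded_support {M : Type*} [MetricSpace M] (base : M)
    (μ : ℕ → ↥(Free M base)) (hμ : WeaklyCauchy μ) :
    ∀ ε > (0 : ℝ), ∃ C : Set M, Bornology.IsBounded C ∧
      ∀ n : ℕ, ∃ ν ∈ freeOn base C, ‖μ n - ν‖ ≤ ε := by
  intro ε hε
  by_contra hcon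
  push_neg at hcon
  have H : ∀ C : Set M, Bornology.IsBounded C → ∃ n, ∀ ν ∈ freeOn base C, ε < ‖μ n - ν‖ :=
    hcon
  -- build the sequence of stages
  obtain ⟨U, hGood, hRel⟩ := seq_of_rel
    (fun k s => GoodStage μ ε k s ∧ (k = 0 → s.Gh = 0))
    (fun s t => t.Gh = s.Gh + s.hl ∧ s.Rout ≤ t.Rin)
    (by
      obtain ⟨s, hs, hGh, _⟩ := stage_step μ hμ hε H 0 0 le_rfl 0
      exact ⟨s, hs, fun _ => hGh⟩)
    (by
      intro k s hs
      obtain ⟨g1, g2, g3, g4, _⟩ := hs.1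
      obtain ⟨t, ht, htGh, hVle⟩ := stage_step μ hμ hε H (k + 1) s.Rout (le_trans g3 g4)
        (s.Gh + s.hl)
      exact ⟨t, ⟨ht, fun hk => absurd hk (Nat.succ_ne_zero k)⟩, htGh, hVle⟩)
  have hmono : ∀ j kk : ℕ, j < kk → (U j).Rout ≤ (U kk).Rin := by
    intro j kk hjk
    induction kk with
    | zero => omega
    | succ K ih =>
      rcases Nat.lt_succ_iff_lt_or_eq.mp hjk with hlt | heq
      · have h1 := ih hlt
        have h2 : (U K).Rin ≤ (U K).Rout := (hGood K).1.2.2.2.1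
        have h3 : (U K).Rout ≤ (U (K + 1)).Rin := (hRel K).2
        linarith
      · subst heq; exact (hRel j).2
  have hbound : ∀ (i : ℕ) (x : M), (U i).hl.toFun x ≠ 0 →
      (U i).Rin < dist x base ∧ dist x base < (U i).Rout := by
    intro i x hx
    constructor
    · by_contra hle; push_neg at hle
      exact hx ((hGood i).1.2.2.2.2.2.1 x hle)
    · by_contra hle; push_neg at hle
      exact hx ((hGood i).1.2.2.2.2.2.2.1 x hle)
  have hdisj : ∀ (x : M) (i j : ℕ), (U i).hl.toFun x ≠ 0 → (U j).hl.toFun x ≠ 0 → i = j := by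
    intro x i j hi hj
    by_contra hij
    rcases Nat.lt_or_ge i j with hlt | hge
    · have h1 := (hbound i x hi).2
      have h2 := (hbound j x hj).1
      have h3 := hmono i j hlt
      linarith
    · rcases Nat.lt_or_ge j i with hlt' | hge'
      · have h1 := (hbound j x hj).2
        have h2 := (hbound i x hi).1
        have h3 := hmono j i hlt'
        linarith
      · omega
  set F : M → ℝ := fun x => ∑' j, (U j).hl.toFun x with hFdef
  have hFlip : LipschitzWith 2 F :=
    lipschitz_tsum_disjoint (fun j => (hGood j).1.2.2.2.2.1) hdisj
  have hFbase : F base = 0 := by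
    have hz : ∀ j : ℕ, (U j).hl.toFun base = 0 := fun j =>
      (hGood j).1.2.2.2.2.2.1 base (by rw [dist_self]; exact (hGood j).1.2.2.1)
    calc F base = ∑' _ : ℕ, (0 : ℝ) := tsum_congr hz
      _ = 0 := tsum_zero
  set fF : Lip0 M base := ⟨F, ⟨2, hFlip⟩, hFbase⟩ with hfFdef
  have hGhsum : ∀ k : ℕ, (U k).Gh = ∑ j ∈ Finset.range k, (U j).hl := by
    intro k
    induction k with
    | zero => simpa using (hGood 0).2 rfl
    | succ K ih => rw [(hRel K).1, ih, Finset.sum_range_succ]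
  have key : ∀ k : ℕ, ε / 8 ≤
      (↑(μ (U k).n) : StrongDual ℝ (Lip0 M base)) fF -
      (↑(μ (U k).m) : StrongDual ℝ (Lip0 M base)) fF := by
    intro k
    obtain ⟨g1, g2, g3, g4, g5, g6, g7, g8, g9, g10, g11⟩ := (hGood k).1
    set T : Lip0 M base := fF - (U k).Gh - (U k).hl with hTdef
    have hjzero : ∀ (j : ℕ) (x : M), k < j → dist x base ≤ (U k).Rout →
        (U j).hl.toFun x = 0 := by
      intro j x hkj hx
      exact (hGood j).1.2.2.2.2.2.1 x (le_trans hx (hmono k j hkj))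
    have hTfun : ∀ x : M,
        T.toFun x = F x - (U k).Gh.toFun x - (U k).hl.toFun x := by
      intro x
      rw [hTdef, Lip0.toFun_sub, Lip0.toFun_sub]
      rfl
    have hGhfun : ∀ x : M, (U k).Gh.toFun x = ∑ j ∈ Finset.range k, (U j).hl.toFun x := by
      intro x
      rw [hGhsum k]
      exact Lip0.toFun_finsetSum _ _ x
    have hTvan : ∀ x : M, dist x base ≤ (U k).Rout → T.toFun x = 0 := by
      intro x hx
      have hFx : F x = ∑ j ∈ Finset.range (k + 1), (U j).hl.toFun x := by
        apply tsum_eq_sum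
        intro j hj
        exact hjzero j x (by simpa using hj) hx
      rw [hTfun, hFx, hGhfun, Finset.sum_range_succ]
      ring
    -- pointwise tail formula
    have hTtail : ∀ x : M, T.toFun x = ∑' j, (if j ≤ k then 0 else (U j).hl.toFun x) := by
      intro x
      have hsum_a : Summable (fun j => if j ≤ k then (U j).hl.toFun x else 0) := by
        apply summable_of_ne_finset_zero (s := Finset.range (k + 1))
        intro j hj
        rw [if_neg]
        intro h
        exact hj (Finset.mem_range.mpr (Nat.lt_succ_of_le h))
      have hsum_v : Summable (fun j => if j ≤ k then 0 else (U j).hl.toFun x) := by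
        apply summable_of_unique
        intro i j hi hj
        have hi' : (U i).hl.toFun x ≠ 0 := by
          by_cases h : i ≤ k
          · rw [if_pos h] at hi; exact absurd rfl hi
          · rwa [if_neg h] at hi
        have hj' : (U j).hl.toFun x ≠ 0 := by
          by_cases h : j ≤ k
          · rw [if_pos h] at hj; exact absurd rfl hj
          · rwa [if_neg h] at hj
        exact hdisj x i j hi' hj'
      have hav : ∀ j : ℕ, (U j).hl.toFun x =
          (if j ≤ k then (U j).hl.toFun x else 0) + (if j ≤ k then 0 else (U j).hl.toFun x) := by
        intro j
        by_cases h : j ≤ k <;> simp [h]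
      have hFx : F x = (∑' j, (if j ≤ k then (U j).hl.toFun x else 0)) +
          (∑' j, (if j ≤ k then 0 else (U j).hl.toFun x)) := by
        calc F x = ∑' j, ((if j ≤ k then (U j).hl.toFun x else 0) +
            (if j ≤ k then 0 else (U j).hl.toFun x)) := tsum_congr hav
          _ = _ := Summable.tsum_add hsum_a hsum_v
      have ha_val : (∑' j, (if j ≤ k then (U j).hl.toFun x else 0)) =
          ∑ j ∈ Finset.range (k + 1), (if j ≤ k then (U j).hl.toFun x else 0) := by
        apply tsum_eq_sum
        intro j hj
        rw [if_neg]
        intro h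
        exact hj (Finset.mem_range.mpr (Nat.lt_succ_of_le h))
      have ha_val2 : (∑ j ∈ Finset.range (k + 1), (if j ≤ k then (U j).hl.toFun x else 0)) =
          ∑ j ∈ Finset.range (k + 1), (U j).hl.toFun x := by
        apply Finset.sum_congr rfl
        intro j hj
        rw [if_pos (Nat.lt_succ_iff.mp (Finset.mem_range.mp hj))]
      rw [hTfun, hGhfun]
      rw [hFx, ha_val, ha_val2, Finset.sum_range_succ]
      ring
    have hTlip : LipschitzWith 2 T.toFun := by
      have hfe : T.toFun = fun x => ∑' j, (fun j x => if j ≤ k then 0 else (U j).hl.toFun x) j x := by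
        funext x
        exact hTtail x
      rw [hfe]
      apply lipschitz_tsum_disjoint
      · intro j
        by_cases h : j ≤ k
        · simp only [if_pos h]
          exact (LipschitzWith.const 0).weaken zero_le_one
        · simp only [if_neg h]
          exact (hGood j).1.2.2.2.2.1
      · intro x i j hi hj
        have hi' : (U i).hl.toFun x ≠ 0 := by
          by_cases h : i ≤ k
          · simp only [if_pos h] at hi; exact absurd rfl hi
          · rwa [if_neg h] at hi
        have hj' : (U j).hl.toFun x ≠ 0 := by
          by_cases h : j ≤ k
          · simp only [if_pos h] at hj; exact absurd rfl hj
          · rwa [if_neg h] at hj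
        exact hdisj x i j hi' hj'
    have hT8 := g10 T hTlip hTvan
    -- decomposition
    have hsplit : ∀ p : ℕ, (↑(μ p) : StrongDual ℝ (Lip0 M base)) fF =
        (↑(μ p) : StrongDual ℝ (Lip0 M base)) (U k).Gh +
        (↑(μ p) : StrongDual ℝ (Lip0 M base)) (U k).hl +
        (↑(μ p) : StrongDual ℝ (Lip0 M base)) T := by
      intro p
      have h1 : (↑(μ p) : StrongDual ℝ (Lip0 M base)) T =
          (↑(μ p) : StrongDual ℝ (Lip0 M base)) fF -
          (↑(μ p) : StrongDual ℝ (Lip0 M base)) (U k).Gh -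
          (↑(μ p) : StrongDual ℝ (Lip0 M base)) (U k).hl := by
        rw [hTdef, map_sub, map_sub]
      linarith
    have e1 := hsplit (U k).n
    have e2 := hsplit (U k).m
    have hb1 := abs_le.mp g11
    have hb2 := abs_le.mp g9
    have hb3 := abs_le.mp hT8.1
    have hb4 := abs_le.mp hT8.2
    rw [e1, e2]
    linarith [g8]
  -- convergence gives a contradiction
  obtain ⟨l, hlim⟩ := hμ (evalAt fF)
  have hn_tend : Tendsto (fun k => (U k).n) atTop atTop :=
    tendsto_atTop_mono (fun k => (hGood k).1.1) tendsto_id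
  have hm_tend : Tendsto (fun k => (U k).m) atTop atTop :=
    tendsto_atTop_mono (fun k => (hGood k).1.2.1) tendsto_id
  have h1 : Tendsto (fun k => (↑(μ ((U k).n)) : StrongDual ℝ (Lip0 M base)) fF)
      atTop (𝓝 l) := hlim.comp hn_tend
  have h2 : Tendsto (fun k => (↑(μ ((U k).m)) : StrongDual ℝ (Lip0 M base)) fF)
      atTop (𝓝 l) := hlim.comp hm_tend
  have h3 : Tendsto (fun k => (↑(μ ((U k).n)) : StrongDual ℝ (Lip0 M base)) fF -
      (↑(μ ((U k).m)) : StrongDual ℝ (Lip0 M base)) fF) atTop (𝓝 (l - l)) := h1.sub h2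
  rw [sub_self] at h3
  have h4 : ∀ᶠ k in atTop, (↑(μ ((U k).n)) : StrongDual ℝ (Lip0 M base)) fF -
      (↑(μ ((U k).m)) : StrongDual ℝ (Lip0 M base)) fF < ε / 8 :=
    Filter.Tendsto.eventually_lt_const (by linarith) h3
  obtain ⟨k, hk⟩ := h4.exists
  linarith [key k]

end FreeSpace
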